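/- Row-deletion (downdating) formula for least squares: let X be an n × d real matrix with A = XᵀX invertible, let Y ∈ ℝ^n, let x ∈ ℝ^d and y ∈ ℝ, and let X̃ be X with the row xᵀ appended and Ỹ be Y with entry y appended. Let β̂₊ = (X̃ᵀX̃)⁻¹X̃ᵀỸ be the least-squares estimate for the augmented data and β̂ = A⁻¹XᵀY the estimate with the row deleted. Then β̂ = β̂₊ − A⁻¹ x ( y − xᵀ β̂₊ ). -/

import Mathlib

open Matrix

/-- Row-deletion (downdating) formula for least squares: if `β̂₊` is the least-squares
estimate for the data `(X̃, Ỹ)` obtained by appending the row `xᵀ` to `X` and the entry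
`y` to `Y`, and `β̂ = A⁻¹XᵀY` (with `A = XᵀX` invertible) is the estimate with that row
deleted, then `β̂ = β̂₊ − A⁻¹ x ( y − xᵀ β̂₊ )`. -/
theorem stmt_8 (n d : ℕ) (X : Matrix (Fin n) (Fin d) ℝ) (Y : Fin n → ℝ)
    (hA : IsUnit (Xᵀ * X).det) (x : Fin d → ℝ) (y : ℝ) :
    let A : Matrix (Fin d) (Fin d) ℝ := Xᵀ * X
    let Xt : Matrix (Fin (n + 1)) (Fin d) ℝ := Matrix.of (Fin.snoc (Matrix.of.symm X) x)
    let Yt : Fin (n + 1) → ℝ := Fin.snoc Y y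
    let βplus : Fin d → ℝ := (Xtᵀ * Xt)⁻¹ *ᵥ (Xtᵀ *ᵥ Yt)
    A⁻¹ *ᵥ (Xᵀ *ᵥ Y) = βplus - (y - x ⬝ᵥ βplus) • (A⁻¹ *ᵥ x) := by
  intro A Xt Yt βplus
  -- key structural identities
  have hXtXt : Xtᵀ * Xt = A + vecMulVec x x := by
    ext i j
    simp only [mul_apply, transpose_apply, Matrix.add_apply, vecMulVec_apply, A]
    rw [Fin.sum_univ_castSucc]
    simp [Xt, Fin.snoc_castSucc, Fin.snoc_last, mul_apply]
  have hXtYt : Xtᵀ *ᵥ Yt = Xᵀ *ᵥ Y + y • x := by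
    ext i
    simp only [mulVec, dotProduct, transpose_apply, Pi.add_apply, Pi.smul_apply, smul_eq_mul]
    rw [Fin.sum_univ_castSucc]
    simp [Xt, Yt, mul_comm]
  -- positivity
  have hApd : A.PosDef := by
    refine posDef_iff_dotProduct_mulVec.mpr ⟨(posSemidef_conjTranspose_mul_self X).isHermitian, fun v hv => ?_⟩
    have hXv : X *ᵥ v ≠ 0 := by
      intro h
      apply hv
      have h0 : A *ᵥ v = 0 := by
        rw [show A *ᵥ v = Xᵀ *ᵥ (X *ᵥ v) by simp [A, mulVec_mulVec], h, mulVec_zero]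
      have hinj := Matrix.mulVec_injective_iff_isUnit.mpr ((isUnit_iff_isUnit_det A).mpr hA)
      exact hinj (by simpa using h0)
    have heq : star v ⬝ᵥ (A *ᵥ v) = (X *ᵥ v) ⬝ᵥ (X *ᵥ v) := by
      simp [A, ← mulVec_mulVec, dotProduct_mulVec, vecMul_transpose, star_trivial,
        dotProduct_comm]
    rw [heq]
    have hle : 0 ≤ (X *ᵥ v) ⬝ᵥ (X *ᵥ v) :=
      Finset.sum_nonneg fun i _ => mul_self_nonneg ((X *ᵥ v) i)
    exact hle.lt_of_ne fun h => hXv (dotProduct_self_eq_zero.mp h.symm)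
  have hvv : (vecMulVec x x).PosSemidef := by
    refine posSemidef_iff_dotProduct_mulVec.mpr ⟨by ext i j; simp [vecMulVec_apply, mul_comm], fun v => ?_⟩
    have heq : star v ⬝ᵥ (vecMulVec x x *ᵥ v) = (x ⬝ᵥ v) * (x ⬝ᵥ v) := by
      simp [vecMulVec_apply, mulVec, dotProduct, Finset.mul_sum, Finset.sum_mul]
      apply Finset.sum_congr rfl; intro i _
      apply Finset.sum_congr rfl; intro j _
      ring
    rw [heq]; exact mul_self_nonneg _
  have hBpd : (Xtᵀ * Xt).PosDef := hXtXt ▸ hApd.add_posSemidef hvv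
  have hBdet : IsUnit (Xtᵀ * Xt).det := hBpd.det_pos.ne'.isUnit
  -- normal equation for the augmented problem
  have hBb : (Xtᵀ * Xt) *ᵥ βplus = Xtᵀ *ᵥ Yt := by
    show (Xtᵀ * Xt) *ᵥ ((Xtᵀ * Xt)⁻¹ *ᵥ (Xtᵀ *ᵥ Yt)) = _
    rw [mulVec_mulVec, mul_nonsing_inv _ hBdet, one_mulVec]
  have hvvb : vecMulVec x x *ᵥ βplus = (x ⬝ᵥ βplus) • x := by
    ext i
    simp [vecMulVec_apply, mulVec, dotProduct, Finset.mul_sum, mul_assoc, mul_comm]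
  have hAb : A *ᵥ βplus = Xᵀ *ᵥ Y + (y - x ⬝ᵥ βplus) • x := by
    have := hBb
    rw [hXtXt, hXtYt, add_mulVec, hvvb] at this
    have h2 : A *ᵥ βplus = Xᵀ *ᵥ Y + y • x - (x ⬝ᵥ βplus) • x := by
      rw [← this]; abel
    rw [h2, sub_smul]; abel
  have hinv : A⁻¹ *ᵥ (A *ᵥ βplus) = βplus := by
    rw [mulVec_mulVec, nonsing_inv_mul _ hA, one_mulVec]
  rw [hAb, mulVec_add, mulVec_smul] at hinv
  exact eq_sub_of_add_eq hinv
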